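/- Fix n ≥ 1 and set b = ⌊log₂ n⌋ + 2. In ℤ[X₀, …, X_{b−1}], let I be the ideal generated by Xᵢ² − (2·Xᵢ + X_{i+1}) for 0 ≤ i ≤ b−2 together with X_{b−1}². If g is a multilinear polynomial with (1 + X₀)ⁿ − g ∈ I, then the number of monomials of g whose coefficient is odd equals 2^{wt(n)}, the n-th term of Gould's sequence, where wt(n) is the number of ones in the binary expansion of n. -/

import Mathlib

open MvPolynomial Finset

lemma odd_choose_split (n k : ℕ) :
    Odd (n.choose k) ↔ Odd ((n % 2).choose (k % 2)) ∧ Odd ((n / 2).choose (k / 2)) := by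
  have := @Choose.choose_modEq_choose_mod_mul_choose_div_nat n k 2 ⟨Nat.prime_two⟩
  rw [Nat.ModEq] at this
  rw [Nat.odd_iff, Nat.odd_iff, Nat.odd_iff, this, Nat.mul_mod]
  rcases Nat.mod_two_eq_zero_or_one (Nat.choose (n % 2) (k % 2)) with h1 | h1 <;>
    rcases Nat.mod_two_eq_zero_or_one (Nat.choose (n / 2) (k / 2)) with h2 | h2 <;>
    simp [h1, h2]

lemma count_odd_choose : ∀ c n : ℕ, n < 2 ^ c →
    ((Finset.range (2 ^ c)).filter (fun k => Odd (n.choose k))).card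
      = 2 ^ (Nat.digits 2 n).sum := by
  intro c
  induction c with
  | zero =>
    intro n hn
    interval_cases n
    norm_num [Finset.range_one, Finset.filter_singleton]
  | succ c ih =>
    intro n hn
    have key : ((Finset.range (2 ^ (c+1))).filter (fun k => Odd (n.choose k))).card
        = (((Finset.range (2 ^ c)).filter (fun q => Odd ((n/2).choose q))) ×ˢ
           ((Finset.range 2).filter (fun r => Odd ((n%2).choose r)))).card := by
      apply Finset.card_nbij' (i := fun k => (k / 2, k % 2)) (j := fun p => 2 * p.1 + p.2)
      · intro k hk
        simp only [mem_coe, mem_filter, mem_range, mem_product] at hk ⊢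
        obtain ⟨hk1, hk2⟩ := hk
        rw [odd_choose_split] at hk2
        have h2c : 2 ^ (c+1) = 2 ^ c * 2 := pow_succ 2 c
        refine ⟨⟨by omega, hk2.2⟩, ⟨by omega, hk2.1⟩⟩
      · rintro ⟨q, r⟩ hp
        simp only [mem_coe, mem_filter, mem_range, mem_product] at hp ⊢
        obtain ⟨⟨hq1, hq2⟩, hr1, hr2⟩ := hp
        have e1 : (2 * q + r) % 2 = r := by omega
        have e2 : (2 * q + r) / 2 = q := by omega
        have h2c : 2 ^ (c+1) = 2 ^ c * 2 := pow_succ 2 c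
        exact ⟨by omega, by rw [odd_choose_split, e1, e2]; exact ⟨hr2, hq2⟩⟩
      · intro k hk; simp only; omega
      · rintro ⟨q, r⟩ hp
        simp only [mem_coe, mem_filter, mem_range, mem_product] at hp
        have : r < 2 := hp.2.1
        have e1 : (2 * q + r) % 2 = r := by omega
        have e2 : (2 * q + r) / 2 = q := by omega
        simp [e1, e2]
    rw [key, Finset.card_product, ih (n/2) (by omega)]
    have h2 : ((Finset.range 2).filter (fun r => Odd ((n%2).choose r))).card = 2 ^ (n % 2) := by
      rcases Nat.mod_two_eq_zero_or_one n with h | h <;> rw [h] <;> decide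
    rw [h2]
    rcases Nat.eq_zero_or_pos n with h | h
    · simp [h]
    · rw [Nat.digits_def' (by norm_num : 1 < 2) h, List.sum_cons, pow_add]
      ring

/-- The generators of the ideal `I`: `Xᵢ² − (2Xᵢ + X_{i+1})` for `i ≤ b-2`, and `X_{b-1}²`. -/
noncomputable def gens (b : ℕ) : Fin b → MvPolynomial (Fin b) ℤ := fun i =>
  if h : (i : ℕ) + 1 < b then X i ^ 2 - (2 * X i + X ⟨(i : ℕ) + 1, h⟩) else X i ^ 2

noncomputable def phi (b : ℕ) : MvPolynomial (Fin b) ℤ →+* Polynomial (ZMod 2) :=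
  MvPolynomial.eval₂Hom (Int.castRingHom _) (fun i => Polynomial.X ^ 2 ^ (i : ℕ))

lemma two_eq_zero : (2 : Polynomial (ZMod 2)) = 0 := by
  have h : (2 : Polynomial (ZMod 2)) = Polynomial.C 1 + Polynomial.C 1 := by norm_num
  rw [h, ← Polynomial.C_add, show (1 + 1 : ZMod 2) = 0 from rfl, Polynomial.C_0]

lemma phi_gens (b : ℕ) (i : Fin b) :
    phi b (gens b i) ∈ Ideal.span {(Polynomial.X : Polynomial (ZMod 2)) ^ 2 ^ b} := by
  unfold gens phi
  split_ifs with h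
  · have : (MvPolynomial.eval₂Hom (Int.castRingHom (Polynomial (ZMod 2)))
        (fun i : Fin b => Polynomial.X ^ 2 ^ (i : ℕ)))
        (X i ^ 2 - (2 * X i + X ⟨(i : ℕ) + 1, h⟩)) = 0 := by
      simp only [map_sub, map_add, map_mul, map_pow, eval₂Hom_X', map_ofNat]
      rw [two_eq_zero, ← pow_mul, show 2 ^ (i:ℕ) * 2 = 2 ^ ((i:ℕ)+1) from (pow_succ 2 _)]
      ring
    rw [this]; exact Ideal.zero_mem _
  · have hib : (i : ℕ) + 1 = b := by omega
    simp only [map_pow, eval₂Hom_X', ← pow_mul]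
    have e : 2 ^ (i:ℕ) * 2 = 2 ^ b := by
      calc 2 ^ (i:ℕ) * 2 = 2 ^ ((i:ℕ)+1) := (pow_succ 2 _).symm
        _ = 2 ^ b := by rw [hib]
    rw [e]
    exact Ideal.subset_span rfl

lemma sum_range_two_pow (b : ℕ) : ∑ i ∈ Finset.range b, 2 ^ i = 2 ^ b - 1 := by
  induction b with
  | zero => simp
  | succ b ih => rw [Finset.sum_range_succ, ih, pow_succ]; omega

/-- value of a multilinear exponent vector -/
def mval {b : ℕ} (d : Fin b →₀ ℕ) : ℕ := ∑ i : Fin b, 2 ^ (i : ℕ) * d i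

lemma mval_lt {b : ℕ} (d : Fin b →₀ ℕ) (hd : ∀ i, d i ≤ 1) : mval d < 2 ^ b := by
  have h1 : mval d ≤ ∑ i : Fin b, 2 ^ (i : ℕ) :=
    Finset.sum_le_sum fun i _ => by
      have := hd i; nlinarith [pow_pos (by norm_num : 0 < 2) (i : ℕ)]
  have h2 : ∑ i : Fin b, 2 ^ (i : ℕ) = 2 ^ b - 1 := by
    rw [Fin.sum_univ_eq_sum_range]; exact sum_range_two_pow b
  have : 0 < 2 ^ b := pow_pos (by norm_num) b
  omega

lemma mval_inj {b : ℕ} (d e : Fin b →₀ ℕ) (hd : ∀ i, d i ≤ 1) (he : ∀ i, e i ≤ 1)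
    (h : mval d = mval e) : d = e := by
  have key : ∀ f : Fin b →₀ ℕ, (∀ i, f i ≤ 1) →
      mval f = ∑ j ∈ (Finset.univ.filter (fun i : Fin b => f i = 1)).image Fin.val, 2 ^ j := by
    intro f hf
    rw [Finset.sum_image (fun x _ y _ h => Fin.val_injective h)]
    have h0 : ∑ i ∈ Finset.univ.filter (fun i : Fin b => f i = 1), 2 ^ (i:ℕ) * f i
        = ∑ i : Fin b, 2 ^ (i:ℕ) * f i :=
      Finset.sum_filter_of_ne (fun i _ hne => by
        have := hf i
        have : f i ≠ 0 := fun h0 => hne (by simp [h0])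
        omega)
    unfold mval
    rw [← h0]
    exact Finset.sum_congr rfl fun i hi => by rw [(Finset.mem_filter.mp hi).2, mul_one]
  rw [key d hd, key e he] at h
  have hsets := Finset.geomSum_injective (n := 2) le_rfl h
  ext i
  have hmem : i.val ∈ (Finset.univ.filter (fun j : Fin b => d j = 1)).image Fin.val ↔
      i.val ∈ (Finset.univ.filter (fun j : Fin b => e j = 1)).image Fin.val := by rw [hsets]
  simp only [Finset.mem_image, Finset.mem_filter, Finset.mem_univ, true_and] at hmem
  have hd' := hd i; have he' := he i
  have h1 : d i = 1 ↔ e i = 1 := by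
    constructor
    · intro hdi
      obtain ⟨j, hj1, hj2⟩ := hmem.mp ⟨i, hdi, rfl⟩
      rwa [← Fin.val_injective hj2]
    · intro hei
      obtain ⟨j, hj1, hj2⟩ := hmem.mpr ⟨i, hei, rfl⟩
      rwa [← Fin.val_injective hj2]
  omega

lemma odd_int_iff (z : ℤ) : Odd z ↔ ((z : ZMod 2) ≠ 0) := by
  rw [Ne, ZMod.intCast_zmod_eq_zero_iff_dvd, Int.odd_iff]
  push_cast
  omega

lemma odd_nat_iff (m : ℕ) : Odd m ↔ ((m : ZMod 2) ≠ 0) := by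
  rw [Ne, ZMod.natCast_eq_zero_iff, Nat.odd_iff]
  omega

theorem stmt14 (n : ℕ) (hn : 1 ≤ n) (b : ℕ) (hb : b = Nat.log 2 n + 2)
    (g : MvPolynomial (Fin b) ℤ)
    (hml : ∀ m ∈ g.support, ∀ i : Fin b, m i ≤ 1)
    (hg : (1 + X (⟨0, by omega⟩ : Fin b)) ^ n - g ∈ Ideal.span (Set.range (gens b))) :
    (g.support.filter fun m => Odd (g.coeff m)).card = 2 ^ (Nat.digits 2 n).sum := by
  classical
  have hnb : n < 2 ^ b := by
    calc n < 2 ^ (Nat.log 2 n + 1) := Nat.lt_pow_succ_log_self (by norm_num) n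
      _ ≤ 2 ^ b := Nat.pow_le_pow_right (by norm_num) (by omega)
  -- φ maps the ideal into the span of X^(2^b)
  have hspan : phi b ((1 + X (⟨0, by omega⟩ : Fin b)) ^ n - g)
      ∈ Ideal.span {(Polynomial.X : Polynomial (ZMod 2)) ^ 2 ^ b} := by
    have hle : Ideal.span (Set.range (gens b)) ≤
        Ideal.comap (phi b) (Ideal.span {(Polynomial.X : Polynomial (ZMod 2)) ^ 2 ^ b}) := by
      rw [Ideal.span_le]
      rintro _ ⟨i, rfl⟩
      exact phi_gens b i
    exact hle hg
  rw [Ideal.mem_span_singleton] at hspan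
  -- φ ((1+X₀)^n) = (1+X)^n
  have h1X : phi b ((1 + X (⟨0, by omega⟩ : Fin b)) ^ n)
      = (1 + Polynomial.X : Polynomial (ZMod 2)) ^ n := by
    rw [map_pow, map_add, map_one]
    unfold phi
    rw [eval₂Hom_X']
    norm_num
  -- expansion of φ g
  have hexp : phi b g = ∑ d ∈ g.support,
      Polynomial.C ((g.coeff d : ℤ) : ZMod 2) * Polynomial.X ^ mval d := by
    unfold phi
    rw [coe_eval₂Hom, eval₂_eq']
    apply Finset.sum_congr rfl
    intro d _
    have hprod : ∏ i : Fin b, ((Polynomial.X : Polynomial (ZMod 2)) ^ 2 ^ (i:ℕ)) ^ d i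
        = (Polynomial.X : Polynomial (ZMod 2)) ^ mval d := by
      unfold mval
      rw [← Finset.prod_pow_eq_pow_sum]
      exact Finset.prod_congr rfl fun i _ => (pow_mul _ _ _).symm
    rw [hprod, Polynomial.C_eq_intCast]
    rfl
  -- the key identity
  have heq : (1 + Polynomial.X : Polynomial (ZMod 2)) ^ n = phi b g := by
    rw [map_sub, h1X] at hspan
    rcases eq_or_ne ((1 + Polynomial.X : Polynomial (ZMod 2)) ^ n - phi b g) 0 with h0 | h0
    · exact sub_eq_zero.mp h0
    · exfalso
      have hd1 : ((1 + Polynomial.X : Polynomial (ZMod 2)) ^ n).natDegree < 2 ^ b := by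
        calc ((1 + Polynomial.X : Polynomial (ZMod 2)) ^ n).natDegree
            ≤ n * (1 + Polynomial.X : Polynomial (ZMod 2)).natDegree :=
              Polynomial.natDegree_pow_le
          _ ≤ n * 1 := by
              gcongr
              exact (Polynomial.natDegree_add_le _ _).trans (by simp)
          _ < 2 ^ b := by omega
      have hd2 : (phi b g).natDegree < 2 ^ b := by
        rw [hexp]
        have hle : (∑ d ∈ g.support,
            Polynomial.C ((g.coeff d : ℤ) : ZMod 2) * Polynomial.X ^ mval d).natDegree
            ≤ 2 ^ b - 1 := by
          apply Polynomial.natDegree_sum_le_of_forall_le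
          intro d hd
          calc (Polynomial.C ((g.coeff d : ℤ) : ZMod 2) * Polynomial.X ^ mval d).natDegree
              ≤ _ + _ := Polynomial.natDegree_mul_le
            _ ≤ 0 + mval d := by
                gcongr <;> simp [Polynomial.natDegree_C, Polynomial.natDegree_X_pow]
            _ ≤ 2 ^ b - 1 := by
                have := mval_lt d (hml d hd); omega
        have : 0 < 2 ^ b := pow_pos (by norm_num) b
        omega
      have hles := Polynomial.natDegree_le_of_dvd hspan h0
      rw [Polynomial.natDegree_X_pow] at hles
      have := Polynomial.natDegree_sub_le ((1 + Polynomial.X : Polynomial (ZMod 2)) ^ n) (phi b g)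
      omega
  -- coefficient identity
  have hcoeff : ∀ k : ℕ, ((n.choose k : ZMod 2)) =
      ∑ d ∈ g.support, if mval d = k then ((g.coeff d : ℤ) : ZMod 2) else 0 := by
    intro k
    have hc := congrArg (fun p : Polynomial (ZMod 2) => p.coeff k) heq
    rw [Polynomial.coeff_one_add_X_pow, hexp, Polynomial.finset_sum_coeff] at hc
    rw [hc]
    apply Finset.sum_congr rfl
    intro d _
    rw [Polynomial.coeff_C_mul, Polynomial.coeff_X_pow]
    rcases eq_or_ne (mval d) k with h | h
    · rw [if_pos h, if_pos h.symm, mul_one]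
    · rw [if_neg h, if_neg (Ne.symm h), mul_zero]
  rw [← count_odd_choose b n hnb]
  apply Finset.card_nbij (i := fun d => mval d)
  · intro d hd
    rw [Finset.mem_coe, Finset.mem_filter] at hd ⊢
    obtain ⟨hds, hodd⟩ := hd
    refine ⟨Finset.mem_range.mpr (mval_lt d (hml d hds)), ?_⟩
    have hc := hcoeff (mval d)
    rw [Finset.sum_eq_single_of_mem d hds (fun e he hne => by
      rw [if_neg]
      intro hme
      exact hne (mval_inj e d (hml e he) (hml d hds) hme)), if_pos rfl] at hc
    rw [odd_nat_iff, hc]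
    exact (odd_int_iff _).mp hodd
  · intro d hd e he hde
    rw [Finset.coe_filter, Set.mem_setOf_eq] at hd he
    exact mval_inj d e (hml d hd.1) (hml e he.1) hde
  · intro k hk
    rw [Finset.coe_filter, Set.mem_setOf_eq, Finset.mem_range] at hk
    obtain ⟨hk1, hk2⟩ := hk
    rw [odd_nat_iff, hcoeff k] at hk2
    obtain ⟨d, hd, hne⟩ := Finset.exists_ne_zero_of_sum_ne_zero hk2
    have hmd : mval d = k := by by_contra hc; rw [if_neg hc] at hne; exact hne rfl
    rw [if_pos hmd] at hne
    refine ⟨d, ?_, hmd⟩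
    rw [Finset.coe_filter, Set.mem_setOf_eq]
    exact ⟨hd, (odd_int_iff _).mpr hne⟩
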